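/- Assume H is quasitriangular with universal R-matrix R ∈ H⊗H (R is invertible, R·Δ(h)·R^{-1} = Δ^{op}(h) for all h ∈ H, (Δ⊗id)R = R^{13}R^{23}, and (id⊗Δ)R = R^{13}R^{12}). Let Ā be a subgroup of A, let J̄ : Ā* → H⊗H be a dynamical twist for Ā, let J : A* → H⊗H be a dynamical twist for A, and let x : A* → H be a vertex-IRF transformation from J̄ to J, i.e. x has invertible values, zero weight with respect to Ā, ε(x(λ)) = 1, and J(λ) = Δ(x(λ)) · J̄(λ̄) · (x²(λ))^{-1} · (x¹(λ − h^{(2)}))^{-1} for all λ, where λ̄ is the restriction of λ to Ā. Define the dynamical R-matrices R(λ) = (J^{21}(λ))^{-1} R J(λ) and R̄(ν) = (J̄^{21}(ν))^{-1} R J̄(ν), where J^{21} = σ∘J with σ the flip of the two tensor factors. Then R(λ) = x²(λ − h^{(1)}) · x¹(λ) · R̄(λ̄) · (x²(λ))^{-1} · (x¹(λ − h^{(2)}))^{-1} for all λ ∈ A*. -/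

import Mathlib

open scoped TensorProduct

noncomputable section

variable {H : Type*} [Ring H] [HopfAlgebra ℂ H]

/-- The character group `A* = Hom(A, ℂˣ)` of a subgroup `A ≤ Hˣ`, written additively. -/
abbrev DChar (A : Subgroup Hˣ) : Type _ := Additive (↥A →* ℂˣ)

/-- An element of a Hopf algebra is group-like if `Δ g = g ⊗ g` and `ε g = 1`. -/
def IsGroupLike (h : H) : Prop :=
  Coalgebra.comul (R := ℂ) h = h ⊗ₜ[ℂ] h ∧ Coalgebra.counit (R := ℂ) h = (1 : ℂ)

/-- The primitive idempotent `P_μ = |A|⁻¹ ∑_{a ∈ A} μ(a)⁻¹ a` of `ℂ[A] ⊆ H`. -/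
def dP (A : Subgroup Hˣ) [Fintype A] (μ : DChar A) : H :=
  (Fintype.card A : ℂ)⁻¹ • ∑ a : A, ((((Additive.toMul μ) a)⁻¹ : ℂˣ) : ℂ) • ((a : Hˣ) : H)

/-- A zero weight element of `H` (w.r.t. `A`): commutes with every `a ∈ A`. -/
def ZeroWeight₁ (A : Subgroup Hˣ) (v : H) : Prop :=
  ∀ a : A, v * ((a : Hˣ) : H) = ((a : Hˣ) : H) * v

/-- A zero weight element of `H ⊗ H` (w.r.t. `A`): commutes with every `a ⊗ a`, `a ∈ A`. -/
def ZeroWeight₂ (A : Subgroup Hˣ) (v : H ⊗[ℂ] H) : Prop :=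
  ∀ a : A, v * (((a : Hˣ) : H) ⊗ₜ[ℂ] ((a : Hˣ) : H))
    = (((a : Hˣ) : H) ⊗ₜ[ℂ] ((a : Hˣ) : H)) * v

/-- `J ↦ J^{12,3} = (Δ ⊗ id)(J)`. -/
def J12_3 : H ⊗[ℂ] H →ₐ[ℂ] (H ⊗[ℂ] H) ⊗[ℂ] H :=
  Algebra.TensorProduct.map (Bialgebra.comulAlgHom ℂ H) (AlgHom.id ℂ H)

/-- `J ↦ J^{1,23} = (id ⊗ Δ)(J)`, written in `(H ⊗ H) ⊗ H`. -/
def J1_23 : H ⊗[ℂ] H →ₐ[ℂ] (H ⊗[ℂ] H) ⊗[ℂ] H :=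
  ((Algebra.TensorProduct.assoc ℂ ℂ ℂ H H H).symm).toAlgHom.comp
    (Algebra.TensorProduct.map (AlgHom.id ℂ H) (Bialgebra.comulAlgHom ℂ H))

/-- `(ε ⊗ id) : H ⊗ H → H`. -/
def epsId : H ⊗[ℂ] H →ₐ[ℂ] H :=
  (Algebra.TensorProduct.lid ℂ H).toAlgHom.comp
    (Algebra.TensorProduct.map (Bialgebra.counitAlgHom ℂ H) (AlgHom.id ℂ H))

/-- `(id ⊗ ε) : H ⊗ H → H`. -/
def idEps : H ⊗[ℂ] H →ₐ[ℂ] H :=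
  (Algebra.TensorProduct.rid ℂ ℂ H).toAlgHom.comp
    (Algebra.TensorProduct.map (AlgHom.id ℂ H) (Bialgebra.counitAlgHom ℂ H))

/-- `x¹(λ - h⁽²⁾) = ∑_μ x(λ-μ) ⊗ P_μ`. -/
def x1shift (A : Subgroup Hˣ) [Fintype A] [Fintype (DChar A)]
    (x : DChar A → H) (lam : DChar A) : H ⊗[ℂ] H :=
  ∑ μ : DChar A, x (lam - μ) ⊗ₜ[ℂ] dP A μ

/-- A dynamical twist `J : A* → H ⊗ H`: a zero weight invertible-valued function satisfying
`J^{12,3}(λ) J^{12}(λ-h⁽³⁾) = J^{1,23}(λ) J^{23}(λ)` and `(ε⊗id)J = (id⊗ε)J = 1`. -/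
def IsDynamicalTwist (A : Subgroup Hˣ) [Fintype A] [Fintype (DChar A)]
    (J : DChar A → H ⊗[ℂ] H) : Prop :=
  (∀ lam, ZeroWeight₂ A (J lam)) ∧
  (∀ lam, IsUnit (J lam)) ∧
  (∀ lam : DChar A,
    J12_3 (J lam) * (∑ μ : DChar A, J (lam - μ) ⊗ₜ[ℂ] dP A μ)
      = J1_23 (J lam)
        * ((Algebra.TensorProduct.assoc ℂ ℂ ℂ H H H).symm ((1 : H) ⊗ₜ[ℂ] J lam))) ∧
  (∀ lam, epsId (J lam) = 1 ∧ idEps (J lam) = 1)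

/-- Restriction `λ ↦ λ̄` of a character of `A` to a subgroup `B ≤ A`. -/
def resChar {B A : Subgroup Hˣ} (hBA : B ≤ A) (lam : DChar A) : DChar B :=
  Additive.ofMul ((Additive.toMul lam).comp (Subgroup.inclusion hBA))

/-- The flip `σ : H ⊗ H → H ⊗ H`. -/
def flipT : H ⊗[ℂ] H ≃ₐ[ℂ] H ⊗[ℂ] H := Algebra.TensorProduct.comm ℂ H H

/-- `v ↦ v^{12}` for constant elements of `H ⊗ H`. -/
def emb12 : H ⊗[ℂ] H →ₐ[ℂ] (H ⊗[ℂ] H) ⊗[ℂ] H := Algebra.TensorProduct.includeLeft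

/-- `v ↦ v^{13}` for constant elements of `H ⊗ H`. -/
def emb13 : H ⊗[ℂ] H →ₐ[ℂ] (H ⊗[ℂ] H) ⊗[ℂ] H :=
  Algebra.TensorProduct.map
    (Algebra.TensorProduct.includeLeft : H →ₐ[ℂ] H ⊗[ℂ] H) (AlgHom.id ℂ H)

/-- `v ↦ v^{23}` for constant elements of `H ⊗ H`. -/
def emb23 : H ⊗[ℂ] H →ₐ[ℂ] (H ⊗[ℂ] H) ⊗[ℂ] H :=
  Algebra.TensorProduct.map
    (Algebra.TensorProduct.includeRight : H →ₐ[ℂ] H ⊗[ℂ] H) (AlgHom.id ℂ H)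

/-- **Corollary (vertex-IRF transformations and dynamical R-matrices).**
Assume `H` is quasitriangular with universal R-matrix `R`.  If `x` is a vertex-IRF
transformation from a dynamical twist `J̄` on `Ā* ` to a dynamical twist `J` on `A*`, then the
associated dynamical R-matrices `R(λ) = J^{21}(λ)⁻¹ R J(λ)` and `R̄(ν) = J̄^{21}(ν)⁻¹ R J̄(ν)`
are related by
`R(λ) = x²(λ-h⁽¹⁾) x¹(λ) R̄(λ̄) (x²(λ))⁻¹ (x¹(λ-h⁽²⁾))⁻¹`. -/
theorem vertexIRF_dynamical_R_matrices
    {H : Type*} [Ring H] [HopfAlgebra ℂ H]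
    (A B : Subgroup Hˣ) [Fintype A] [Fintype B]
    [Fintype (DChar A)] [Fintype (DChar B)]
    (hBA : B ≤ A)
    (hgl : ∀ a : A, IsGroupLike ((a : Hˣ) : H))
    (hab : ∀ a b : A, a * b = b * a)
    -- quasitriangular structure
    (R : H ⊗[ℂ] H)
    (hRu : IsUnit R)
    (hRΔ : ∀ h : H, R * Bialgebra.comulAlgHom ℂ H h * Ring.inverse R
      = flipT (Bialgebra.comulAlgHom ℂ H h))
    (hR1 : J12_3 R = emb13 R * emb23 R)
    (hR2 : J1_23 R = emb13 R * emb12 R)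
    -- the twists
    (J : DChar A → H ⊗[ℂ] H)
    (hJ : IsDynamicalTwist A J)
    (Jbar : DChar B → H ⊗[ℂ] H)
    (hJbar : IsDynamicalTwist B Jbar)
    -- the vertex-IRF transformation
    (x : DChar A → H)
    (hxu : ∀ lam, IsUnit (x lam))
    (hxw : ∀ lam, ZeroWeight₁ B (x lam))
    (hxe : ∀ lam, Bialgebra.counitAlgHom ℂ H (x lam) = 1)
    (hJx : ∀ lam, J lam =
      Bialgebra.comulAlgHom ℂ H (x lam) * Jbar (resChar hBA lam)
        * Ring.inverse ((1 : H) ⊗ₜ[ℂ] x lam)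
        * Ring.inverse (x1shift A x lam)) :
    ∀ lam : DChar A,
      Ring.inverse (flipT (J lam)) * R * J lam
        = (∑ μ : DChar A, dP A μ ⊗ₜ[ℂ] x (lam - μ))
          * (x lam ⊗ₜ[ℂ] (1 : H))
          * (Ring.inverse (flipT (Jbar (resChar hBA lam))) * R * Jbar (resChar hBA lam))
          * Ring.inverse ((1 : H) ⊗ₜ[ℂ] x lam)
          * Ring.inverse (x1shift A x lam) := by
  intro lam
  classical
  -- units
  obtain ⟨uD, hD⟩ := (hxu lam).map (Bialgebra.comulAlgHom ℂ H)
  obtain ⟨uJb, hJb⟩ := hJbar.2.1 (resChar hBA lam)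
  obtain ⟨uX2, hX2⟩ := (hxu lam).map
    (Algebra.TensorProduct.includeRight : H →ₐ[ℂ] H ⊗[ℂ] H)
  obtain ⟨uR, hR⟩ := hRu
  have hX2' : (uX2 : H ⊗[ℂ] H) = (1 : H) ⊗ₜ[ℂ] x lam := hX2
  have hSu : IsUnit (x1shift A x lam) := by
    by_contra h
    have h0 : Ring.inverse (x1shift A x lam) = 0 := Ring.inverse_non_unit _ h
    have hJ0 : J lam = 0 := by rw [hJx lam, h0, mul_zero]
    have h1 : IsUnit (0 : H ⊗[ℂ] H) := hJ0 ▸ hJ.2.1 lam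
    have h01 : (0 : H ⊗[ℂ] H) = 1 := isUnit_zero_iff.mp h1
    haveI := subsingleton_of_zero_eq_one h01
    exact h (isUnit_of_subsingleton _)
  obtain ⟨uS, hS⟩ := hSu
  -- the flip as a monoid hom and on units
  set f : (H ⊗[ℂ] H) →* (H ⊗[ℂ] H) :=
    ((flipT : H ⊗[ℂ] H ≃ₐ[ℂ] H ⊗[ℂ] H).toAlgHom.toRingHom.toMonoidHom) with hf
  have hfapp : ∀ a : H ⊗[ℂ] H, f a = flipT a := fun a => rfl
  set φ : (H ⊗[ℂ] H)ˣ →* (H ⊗[ℂ] H)ˣ := Units.map f with hφ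
  have hφcoe : ∀ u : (H ⊗[ℂ] H)ˣ, ((φ u : (H ⊗[ℂ] H)ˣ) : H ⊗[ℂ] H) = flipT (u : H ⊗[ℂ] H) :=
    fun u => rfl
  -- J lam as a unit
  set uJ' : (H ⊗[ℂ] H)ˣ := uD * uJb * uX2⁻¹ * uS⁻¹ with huJ'
  have hJlam : J lam = (uJ' : H ⊗[ℂ] H) := by
    rw [hJx lam, ← hD, ← hJb, ← hX2', ← hS, Ring.inverse_unit, Ring.inverse_unit]
    simp [huJ', Units.val_mul]
  -- the quasitriangularity relation on units
  have hrel : φ uD = uR * uD * uR⁻¹ := by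
    apply Units.ext
    rw [hφcoe, hD, ← hRΔ (x lam), ← hD, ← hR, Ring.inverse_unit,
      Units.val_mul, Units.val_mul]
  -- identify the sum on the RHS with the flip of x1shift
  have hS2 : (∑ μ : DChar A, dP A μ ⊗ₜ[ℂ] x (lam - μ)) = ((φ uS : (H ⊗[ℂ] H)ˣ) : H ⊗[ℂ] H) := by
    rw [hφcoe, hS]
    unfold x1shift
    rw [map_sum]
    refine Finset.sum_congr rfl fun μ _ => ?_
    simp [flipT]
  have hX1 : (x lam ⊗ₜ[ℂ] (1 : H)) = ((φ uX2 : (H ⊗[ℂ] H)ˣ) : H ⊗[ℂ] H) := by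
    rw [hφcoe, hX2']
    simp [flipT]
  -- the key computation in the unit group
  have key : (φ uJ')⁻¹ * uR * uJ'
      = φ uS * φ uX2 * ((φ uJb)⁻¹ * uR * uJb) * uX2⁻¹ * uS⁻¹ := by
    rw [huJ']
    simp only [map_mul, map_inv]
    rw [hrel]
    group
  -- put everything together
  rw [hJlam, hS2, hX1, ← hJb, ← hX2', ← hS, ← hR,
    ← hφcoe uJ', ← hφcoe uJb,
    Ring.inverse_unit (φ uJ'), Ring.inverse_unit (φ uJb),
    Ring.inverse_unit uX2, Ring.inverse_unit uS]
  calc ((φ uJ')⁻¹ : (H ⊗[ℂ] H)ˣ) * (uR : (H ⊗[ℂ] H)ˣ).val * (uJ' : (H ⊗[ℂ] H)ˣ).val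
      = (((φ uJ')⁻¹ * uR * uJ' : (H ⊗[ℂ] H)ˣ) : H ⊗[ℂ] H) := by simp [Units.val_mul]
    _ = ((φ uS * φ uX2 * ((φ uJb)⁻¹ * uR * uJb) * uX2⁻¹ * uS⁻¹ : (H ⊗[ℂ] H)ˣ) : H ⊗[ℂ] H) := by
        rw [key]
    _ = _ := by simp [Units.val_mul, mul_assoc]
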